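/- For integers i, j ≥ 1, the number of partitions σ of {1, …, 2i+2j} such that every block of σ meets each of the four index sets J_1 = {1,…,i}, J_2 = {i+1,…,2i}, J_3 = {2i+1,…,2i+j}, J_4 = {2i+j+1,…,2i+2j} in at most one element, and every block has at least two elements, is at most (i!)² (j!)² max{i+1, j+1}^{11} / ⌈max{i,j}/7⌉!. -/

import Mathlib

open Finset

namespace Stmt13

variable (i j : ℕ)

abbrev n : ℕ := 2 * i + 2 * j

def sz : Fin 4 → ℕ := ![i, i, j, j]

def J : Fin 4 → Finset (Fin (n i j)) :=
  ![Finset.univ.filter (fun a : Fin (n i j) => (a : ℕ) < i),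
    Finset.univ.filter (fun a : Fin (n i j) => i ≤ (a : ℕ) ∧ (a : ℕ) < 2 * i),
    Finset.univ.filter (fun a : Fin (n i j) => 2 * i ≤ (a : ℕ) ∧ (a : ℕ) < 2 * i + j),
    Finset.univ.filter (fun a : Fin (n i j) => 2 * i + j ≤ (a : ℕ))]

def uOf (x : Fin (n i j)) : Fin 4 :=
  if (x : ℕ) < i then 0 else if (x : ℕ) < 2 * i then 1
  else if (x : ℕ) < 2 * i + j then 2 else 3

lemma mem_J_iff (x : Fin (n i j)) (u : Fin 4) : x ∈ J i j u ↔ uOf i j x = u := by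
  have hx := x.isLt
  fin_cases u <;>
    simp only [J, uOf, Matrix.cons_val_zero, Matrix.cons_val_one, Matrix.head_cons,
      Matrix.cons_val_two, Matrix.tail_cons, Matrix.cons_val_three, mem_filter, mem_univ,
      true_and] <;>
    split_ifs <;> simp_all <;> omega

lemma mem_J_uOf (x : Fin (n i j)) : x ∈ J i j (uOf i j x) :=
  (mem_J_iff i j x _).2 rfl

lemma card_filter_Ico {N l c : ℕ} (h : l + c ≤ N) :
    ((Finset.univ : Finset (Fin N)).filter (fun a : Fin N => l ≤ (a : ℕ) ∧ (a : ℕ) < l + c)).card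
      = c := by
  have : ((Finset.univ : Finset (Fin N)).filter
        (fun a : Fin N => l ≤ (a : ℕ) ∧ (a : ℕ) < l + c)).card
      = (Finset.range c).card := by
    refine Finset.card_bij' (fun (a : Fin N) _ => (a : ℕ) - l)
      (fun (m : ℕ) (hm : m ∈ Finset.range c) =>
        (⟨m + l, by simp only [mem_range] at hm; omega⟩ : Fin N)) ?_ ?_ ?_ ?_
    · intro a ha
      simp only [mem_filter, mem_univ, true_and] at ha
      simp only [mem_range]; omega
    · intro m hm
      simp only [mem_range] at hm
      simp only [mem_filter, mem_univ, true_and]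
      constructor <;> omega
    · intro a ha
      simp only [mem_filter, mem_univ, true_and] at ha
      apply Fin.ext
      show (a : ℕ) - l + l = a
      omega
    · intro m hm
      simp only [mem_range] at hm
      show m + l - l = m
      omega
  rw [this, Finset.card_range]

lemma card_J (u : Fin 4) : (J i j u).card = sz i j u := by
  have h0 : ((Finset.univ : Finset (Fin (n i j))).filter
      (fun a : Fin (n i j) => (a : ℕ) < i)).card = i := by
    rw [Finset.filter_congr (q := fun a : Fin (n i j) => 0 ≤ (a : ℕ) ∧ (a : ℕ) < 0 + i)
      (fun x _ => by omega)]
    exact card_filter_Ico (by simp only [n]; omega)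
  have h1 : ((Finset.univ : Finset (Fin (n i j))).filter
      (fun a : Fin (n i j) => i ≤ (a : ℕ) ∧ (a : ℕ) < 2 * i)).card = i := by
    rw [Finset.filter_congr (q := fun a : Fin (n i j) => i ≤ (a : ℕ) ∧ (a : ℕ) < i + i)
      (fun x _ => by omega)]
    exact card_filter_Ico (by simp only [n]; omega)
  have h2 : ((Finset.univ : Finset (Fin (n i j))).filter
      (fun a : Fin (n i j) => 2 * i ≤ (a : ℕ) ∧ (a : ℕ) < 2 * i + j)).card = j :=
    card_filter_Ico (by simp only [n]; omega)
  have h3 : ((Finset.univ : Finset (Fin (n i j))).filter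
      (fun a : Fin (n i j) => 2 * i + j ≤ (a : ℕ))).card = j := by
    rw [Finset.filter_congr
      (q := fun a : Fin (n i j) => 2 * i + j ≤ (a : ℕ) ∧ (a : ℕ) < (2 * i + j) + j)
      (fun x _ => by have := x.isLt; simp only [n] at this; constructor <;> omega)]
    exact card_filter_Ico (by simp only [n]; omega)
  fin_cases u
  · exact h0
  · exact h1
  · exact h2
  · exact h3

def enc (t : Finset (Fin 4)) : ℕ := ∑ u ∈ t, 2 ^ (u : ℕ)

lemma enc_inj : ∀ s t : Finset (Fin 4), enc s = enc t → s = t := by decide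



/-- Number of "types" (subsets of `Fin 4` of size at least 2). -/
abbrev TypeIdx := {t : Finset (Fin 4) // 2 ≤ t.card}

/-- `M = max i j + 1`. -/
abbrev M : ℕ := max i j + 1

/-- The codomain of the encoding map. -/
abbrev TT :=
  (TypeIdx → Fin (M i j)) × ((u : Fin 4) → ({x // x ∈ J i j u} ↪ Fin (sz i j u)))

def kk (κ : TypeIdx → Fin (M i j)) (t : Finset (Fin 4)) : ℕ :=
  if h : 2 ≤ t.card then (κ ⟨t, h⟩ : ℕ) else 0

def offset (κ : TypeIdx → Fin (M i j)) (u : Fin 4) (t : Finset (Fin 4)) : ℕ :=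
  ∑ t' ∈ Finset.univ.filter (fun t' : Finset (Fin 4) => u ∈ t' ∧ enc t' < enc t), kk i j κ t'

lemma offset_add_le_offset (κ : TypeIdx → Fin (M i j)) {u : Fin 4} {t t' : Finset (Fin 4)}
    (hu : u ∈ t) (h : enc t < enc t') :
    offset i j κ u t + kk i j κ t ≤ offset i j κ u t' := by
  have ht : t ∉ Finset.univ.filter (fun t'' : Finset (Fin 4) => u ∈ t'' ∧ enc t'' < enc t) := by
    simp only [mem_filter, mem_univ, true_and]; omega
  have : offset i j κ u t + kk i j κ t
      = ∑ t'' ∈ insert t (Finset.univ.filter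
          (fun t'' : Finset (Fin 4) => u ∈ t'' ∧ enc t'' < enc t)), kk i j κ t'' := by
    rw [Finset.sum_insert ht, offset]; ring
  rw [this, offset]
  apply Finset.sum_le_sum_of_subset
  intro s hs
  simp only [mem_insert, mem_filter, mem_univ, true_and] at hs ⊢
  rcases hs with rfl | ⟨h1, h2⟩
  · exact ⟨hu, h⟩
  · exact ⟨h1, by omega⟩

lemma offset_add_le_total (κ : TypeIdx → Fin (M i j)) {u : Fin 4} {t : Finset (Fin 4)}
    (hu : u ∈ t) :
    offset i j κ u t + kk i j κ t
      ≤ ∑ t' ∈ Finset.univ.filter (fun t' : Finset (Fin 4) => u ∈ t'), kk i j κ t' := by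
  have ht : t ∉ Finset.univ.filter (fun t'' : Finset (Fin 4) => u ∈ t'' ∧ enc t'' < enc t) := by
    simp only [mem_filter, mem_univ, true_and]; omega
  have : offset i j κ u t + kk i j κ t
      = ∑ t'' ∈ insert t (Finset.univ.filter
          (fun t'' : Finset (Fin 4) => u ∈ t'' ∧ enc t'' < enc t)), kk i j κ t'' := by
    rw [Finset.sum_insert ht, offset]; ring
  rw [this]
  apply Finset.sum_le_sum_of_subset
  intro s hs
  simp only [mem_insert, mem_filter, mem_univ, true_and] at hs ⊢
  rcases hs with rfl | ⟨h1, _⟩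
  · exact hu
  · exact h1

lemma slot_eq (κ : TypeIdx → Fin (M i j)) {u : Fin 4} {t t' : Finset (Fin 4)} {r r' : ℕ}
    (hu : u ∈ t) (hu' : u ∈ t') (hr : r < kk i j κ t) (hr' : r' < kk i j κ t')
    (h : offset i j κ u t + r = offset i j κ u t' + r') : t = t' ∧ r = r' := by
  have htt : t = t' := by
    by_contra hne
    have hne' : enc t ≠ enc t' := fun he => hne (enc_inj _ _ he)
    rcases lt_or_gt_of_ne hne' with hlt | hlt
    · have := offset_add_le_offset i j κ hu hlt; omega
    · have := offset_add_le_offset i j κ hu' hlt; omega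
  subst htt
  exact ⟨rfl, by omega⟩

def hval (h : (u : Fin 4) → ({x // x ∈ J i j u} ↪ Fin (sz i j u))) (x : Fin (n i j)) : ℕ :=
  (h (uOf i j x) ⟨x, mem_J_uOf i j x⟩ : ℕ)

/-- Decode a tuple into a family of candidate blocks. -/
def decodeB (w : TT i j) : Finset (Finset (Fin (n i j))) :=
  ((Finset.univ : Finset (Finset (Fin 4))).sigma (fun t => Finset.range (kk i j w.1 t))).image
    (fun p => Finset.univ.filter (fun x : Fin (n i j) =>
      uOf i j x ∈ p.1 ∧ hval i j w.2 x = offset i j w.1 (uOf i j x) p.1 + p.2))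



/-- The property from the theorem statement, repackaged. -/
def Pred (σ : Finpartition (Finset.univ : Finset (Fin (n i j)))) : Prop :=
  ∀ A ∈ σ.parts, 2 ≤ A.card ∧ ∀ u : Fin 4, (A ∩ J i j u).card ≤ 1

/-- The type of a block. -/
def tp (A : Finset (Fin (n i j))) : Finset (Fin 4) :=
  Finset.univ.filter (fun u => (A ∩ J i j u).Nonempty)

def cnt (σ : Finpartition (Finset.univ : Finset (Fin (n i j)))) (t : Finset (Fin 4)) : ℕ :=
  (σ.parts.filter (fun A => tp i j A = t)).card

variable {i j}

lemma card_inter {σ : Finpartition (Finset.univ : Finset (Fin (n i j)))} (hσ : Pred i j σ)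
    {A : Finset (Fin (n i j))} (hA : A ∈ σ.parts) (u : Fin 4) :
    (A ∩ J i j u).card = if u ∈ tp i j A then 1 else 0 := by
  by_cases h : u ∈ tp i j A
  · simp only [h, if_true]
    simp only [tp, mem_filter, mem_univ, true_and] at h
    exact le_antisymm ((hσ A hA).2 u) h.card_pos
  · simp only [h, if_false]
    simp only [tp, mem_filter, mem_univ, true_and, Finset.not_nonempty_iff_eq_empty] at h
    simp [h]

lemma filter_uOf_eq_inter {A : Finset (Fin (n i j))} (u : Fin 4) :
    A.filter (fun x => uOf i j x = u) = A ∩ J i j u := by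
  ext x
  simp only [mem_filter, mem_inter, mem_J_iff]

lemma tp_card {σ : Finpartition (Finset.univ : Finset (Fin (n i j)))} (hσ : Pred i j σ)
    {A : Finset (Fin (n i j))} (hA : A ∈ σ.parts) : (tp i j A).card = A.card := by
  have h1 : A.card = ∑ u ∈ (Finset.univ : Finset (Fin 4)),
      (A.filter (fun x => uOf i j x = u)).card :=
    Finset.card_eq_sum_card_fiberwise (fun x _ => Finset.mem_univ _)
  rw [h1]
  have h2 : ∀ u ∈ (Finset.univ : Finset (Fin 4)),
      (A.filter (fun x => uOf i j x = u)).card = if u ∈ tp i j A then 1 else 0 := by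
    intro u _
    rw [filter_uOf_eq_inter, card_inter hσ hA]
  rw [Finset.sum_congr rfl h2]
  rw [Finset.sum_ite_mem, Finset.univ_inter, Finset.card_eq_sum_ones]

lemma two_le_tp_card {σ : Finpartition (Finset.univ : Finset (Fin (n i j)))} (hσ : Pred i j σ)
    {A : Finset (Fin (n i j))} (hA : A ∈ σ.parts) : 2 ≤ (tp i j A).card := by
  rw [tp_card hσ hA]; exact (hσ A hA).1

lemma cnt_eq_zero {σ : Finpartition (Finset.univ : Finset (Fin (n i j)))} (hσ : Pred i j σ)
    {t : Finset (Fin 4)} (ht : t.card < 2) : cnt i j σ t = 0 := by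
  rw [cnt, Finset.card_eq_zero, Finset.filter_eq_empty_iff]
  intro A hA h
  exact absurd (h ▸ two_le_tp_card hσ hA) (by omega)

lemma part_filter_eq {σ : Finpartition (Finset.univ : Finset (Fin (n i j)))}
    {A : Finset (Fin (n i j))} (hA : A ∈ σ.parts) (s : Finset (Fin (n i j))) :
    s.filter (fun x => σ.part x = A) = s ∩ A := by
  ext x
  simp only [mem_filter, mem_inter, and_congr_right_iff]
  intro _
  constructor
  · rintro rfl; exact σ.mem_part (Finset.mem_univ x)
  · intro hx; exact σ.part_eq_of_mem hA hx

lemma sum_cnt {σ : Finpartition (Finset.univ : Finset (Fin (n i j)))} (hσ : Pred i j σ)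
    (u : Fin 4) :
    ∑ t ∈ Finset.univ.filter (fun t : Finset (Fin 4) => u ∈ t), cnt i j σ t = sz i j u := by
  have h1 : (J i j u).card = ∑ A ∈ σ.parts,
      ((J i j u).filter (fun x => σ.part x = A)).card :=
    Finset.card_eq_sum_card_fiberwise (fun x _ => σ.part_mem.2 (Finset.mem_univ x))
  have h2 : (J i j u).card
      = ∑ A ∈ σ.parts, (if u ∈ tp i j A then 1 else 0) := by
    rw [h1]
    apply Finset.sum_congr rfl
    intro A hA
    rw [part_filter_eq hA, Finset.inter_comm, card_inter hσ hA]
  have h3 : (J i j u).card = (σ.parts.filter (fun A => u ∈ tp i j A)).card := by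
    rw [h2, Finset.card_filter]
  have h4 : (σ.parts.filter (fun A => u ∈ tp i j A)).card
      = ∑ t ∈ Finset.univ.filter (fun t : Finset (Fin 4) => u ∈ t),
        ((σ.parts.filter (fun A => u ∈ tp i j A)).filter (fun A => tp i j A = t)).card := by
    apply Finset.card_eq_sum_card_fiberwise
    intro A hA
    simp only [mem_coe, mem_filter, mem_univ, true_and] at hA ⊢
    exact hA.2
  have h5 : ∀ t ∈ Finset.univ.filter (fun t : Finset (Fin 4) => u ∈ t),
      ((σ.parts.filter (fun A => u ∈ tp i j A)).filter (fun A => tp i j A = t)).card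
        = cnt i j σ t := by
    intro t ht
    simp only [mem_filter, mem_univ, true_and] at ht
    rw [cnt]
    congr 1
    ext A
    simp only [mem_filter]
    constructor
    · rintro ⟨⟨hA, _⟩, h⟩; exact ⟨hA, h⟩
    · rintro ⟨hA, h⟩; exact ⟨⟨hA, h ▸ ht⟩, h⟩
  rw [← card_J i j u, h3, h4, Finset.sum_congr rfl h5]

lemma sz_le_max (u : Fin 4) : sz i j u ≤ max i j := by
  fin_cases u <;> simp [sz] <;> omega

lemma cnt_lt_M {σ : Finpartition (Finset.univ : Finset (Fin (n i j)))} (hσ : Pred i j σ)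
    {t : Finset (Fin 4)} (ht : 2 ≤ t.card) : cnt i j σ t < M i j := by
  obtain ⟨u, hu⟩ := Finset.card_pos.1 (by omega : 0 < t.card)
  have h1 : cnt i j σ t ≤ ∑ t' ∈ Finset.univ.filter (fun t' : Finset (Fin 4) => u ∈ t'),
      cnt i j σ t' := by
    apply Finset.single_le_sum (f := fun t' => cnt i j σ t')
    · intro x _; exact Nat.zero_le _
    · simp only [mem_filter, mem_univ, true_and]; exact hu
  have := sum_cnt hσ u
  have := sz_le_max (i := i) (j := j) u
  simp only [M]
  omega



/-- `d = ⌈max i j / 7⌉`. -/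
noncomputable def dd (a b : ℕ) : ℕ := ⌈((max a b : ℕ) : ℝ) / 7⌉₊

lemma dd_le {c : ℕ} (h : max i j ≤ 7 * c) : dd i j ≤ c := by
  rw [dd, Nat.ceil_le, div_le_iff₀ (by norm_num : (0:ℝ) < 7)]
  have h7 : (max i j : ℕ) ≤ c * 7 := by omega
  exact_mod_cast h7

def u0 : Fin 4 := if j ≤ i then 0 else 2

lemma sz_u0 : sz i j (u0 (i := i) (j := j)) = max i j := by
  rw [u0]; split_ifs with h <;> simp [sz] <;> omega

lemma card_filter_mem (u : Fin 4) :
    ((Finset.univ : Finset (Finset (Fin 4))).filter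
      (fun t => u ∈ t ∧ 2 ≤ t.card)).card = 7 := by
  fin_cases u <;> decide

lemma exists_tstar {σ : Finpartition (Finset.univ : Finset (Fin (n i j)))} (hσ : Pred i j σ) :
    ∃ t : Finset (Fin 4), (u0 (i := i) (j := j) ∈ t ∧ 2 ≤ t.card) ∧
      max i j ≤ 7 * cnt i j σ t := by
  set u := u0 (i := i) (j := j)
  have hsum : ∑ t ∈ (Finset.univ : Finset (Finset (Fin 4))).filter
      (fun t => u ∈ t ∧ 2 ≤ t.card), cnt i j σ t = max i j := by
    rw [← sz_u0 (i := i) (j := j), ← sum_cnt hσ u]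
    apply Finset.sum_subset
    · intro t ht
      simp only [mem_filter, mem_univ, true_and] at ht ⊢
      exact ht.1
    · intro t ht hnt
      simp only [mem_filter, mem_univ, true_and] at ht hnt
      exact cnt_eq_zero hσ (lt_of_not_ge (fun hge => hnt ⟨ht, hge⟩))
  have hne : ((Finset.univ : Finset (Finset (Fin 4))).filter
      (fun t => u ∈ t ∧ 2 ≤ t.card)).Nonempty := by
    rw [← Finset.card_pos, card_filter_mem]; norm_num
  have hle : ∑ t ∈ (Finset.univ : Finset (Finset (Fin 4))).filter
        (fun t => u ∈ t ∧ 2 ≤ t.card), max i j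
      ≤ ∑ t ∈ (Finset.univ : Finset (Finset (Fin 4))).filter
        (fun t => u ∈ t ∧ 2 ≤ t.card), 7 * cnt i j σ t := by
    rw [Finset.sum_const, card_filter_mem, ← Finset.mul_sum, hsum, smul_eq_mul]
  obtain ⟨t, ht, hle'⟩ := Finset.exists_le_of_sum_le hne hle
  simp only [mem_filter, mem_univ, true_and] at ht
  exact ⟨t, ht, hle'⟩

noncomputable def tstar (σ : Finpartition (Finset.univ : Finset (Fin (n i j))))
    (hσ : Pred i j σ) : Finset (Fin 4) :=
  Classical.choose (exists_tstar hσ)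

lemma u0_mem_tstar {σ : Finpartition (Finset.univ : Finset (Fin (n i j)))} (hσ : Pred i j σ) :
    u0 (i := i) (j := j) ∈ tstar σ hσ :=
  (Classical.choose_spec (exists_tstar hσ)).1.1

lemma dd_le_cnt_tstar {σ : Finpartition (Finset.univ : Finset (Fin (n i j)))}
    (hσ : Pred i j σ) : dd i j ≤ cnt i j σ (tstar σ hσ) :=
  dd_le (Classical.choose_spec (exists_tstar hσ)).2

noncomputable def kappa (σ : Finpartition (Finset.univ : Finset (Fin (n i j))))
    (hσ : Pred i j σ) : TypeIdx → Fin (M i j) :=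
  fun t => ⟨cnt i j σ t.1, cnt_lt_M hσ t.2⟩

lemma kk_kappa {σ : Finpartition (Finset.univ : Finset (Fin (n i j)))} (hσ : Pred i j σ)
    (t : Finset (Fin 4)) : kk i j (kappa σ hσ) t = cnt i j σ t := by
  rw [kk]
  split_ifs with h
  · rfl
  · exact (cnt_eq_zero hσ (by omega)).symm

noncomputable def eT (σ : Finpartition (Finset.univ : Finset (Fin (n i j))))
    (t : Finset (Fin 4)) :
    {A // A ∈ σ.parts.filter (fun A => tp i j A = t)} ≃ Fin (cnt i j σ t) :=
  (σ.parts.filter (fun A => tp i j A = t)).equivFin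

noncomputable def pie (σ : Finpartition (Finset.univ : Finset (Fin (n i j))))
    (hσ : Pred i j σ) (τ : Equiv.Perm (Fin (dd i j))) :
    Equiv.Perm (Fin (cnt i j σ (tstar σ hσ))) :=
  τ.viaFintypeEmbedding (Fin.castLEEmb (dd_le_cnt_tstar hσ))

noncomputable def ridx (σ : Finpartition (Finset.univ : Finset (Fin (n i j))))
    (hσ : Pred i j σ) (τ : Equiv.Perm (Fin (dd i j))) (t : Finset (Fin 4))
    (A : Finset (Fin (n i j))) (hA : A ∈ σ.parts.filter (fun B => tp i j B = t)) : ℕ :=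
  if h : t = tstar σ hσ then
    (pie σ hσ τ (Fin.cast (congrArg (cnt i j σ) h) (eT σ t ⟨A, hA⟩)) : ℕ)
  else (eT σ t ⟨A, hA⟩ : ℕ)

lemma ridx_lt {σ : Finpartition (Finset.univ : Finset (Fin (n i j)))} (hσ : Pred i j σ)
    (τ : Equiv.Perm (Fin (dd i j))) {t : Finset (Fin 4)} {A : Finset (Fin (n i j))}
    (hA : A ∈ σ.parts.filter (fun B => tp i j B = t)) :
    ridx σ hσ τ t A hA < cnt i j σ t := by
  rw [ridx]
  split_ifs with h
  · exact lt_of_lt_of_le (pie σ hσ τ _).isLt (congrArg (cnt i j σ) h).ge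
  · exact (eT σ t ⟨A, hA⟩).isLt

lemma ridx_inj {σ : Finpartition (Finset.univ : Finset (Fin (n i j)))} (hσ : Pred i j σ)
    (τ : Equiv.Perm (Fin (dd i j))) {t : Finset (Fin 4)} {A B : Finset (Fin (n i j))}
    (hA : A ∈ σ.parts.filter (fun C => tp i j C = t))
    (hB : B ∈ σ.parts.filter (fun C => tp i j C = t))
    (h : ridx σ hσ τ t A hA = ridx σ hσ τ t B hB) : A = B := by
  rw [ridx, ridx] at h
  split_ifs at h with ht
  · have h2 := (pie σ hσ τ).injective (Fin.ext h)
    have h3 : (eT σ t ⟨A, hA⟩ : ℕ) = (eT σ t ⟨B, hB⟩ : ℕ) := by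
      have := congrArg Fin.val h2
      simpa using this
    exact congrArg Subtype.val ((eT σ t).injective (Fin.ext h3))
  · exact congrArg Subtype.val ((eT σ t).injective (Fin.ext h))

lemma ridx_congr {σ : Finpartition (Finset.univ : Finset (Fin (n i j)))} (hσ : Pred i j σ)
    (τ : Equiv.Perm (Fin (dd i j))) {t1 t2 : Finset (Fin 4)} {A B : Finset (Fin (n i j))}
    (ht : t1 = t2) (hAB : A = B)
    (h1 : A ∈ σ.parts.filter (fun C => tp i j C = t1))
    (h2 : B ∈ σ.parts.filter (fun C => tp i j C = t2)) :
    ridx σ hσ τ t1 A h1 = ridx σ hσ τ t2 B h2 := by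
  subst ht; subst hAB; rfl

lemma ridx_surj {σ : Finpartition (Finset.univ : Finset (Fin (n i j)))} (hσ : Pred i j σ)
    (τ : Equiv.Perm (Fin (dd i j))) {t : Finset (Fin 4)} {r : ℕ} (hr : r < cnt i j σ t) :
    ∃ (A : Finset (Fin (n i j))) (hA : A ∈ σ.parts.filter (fun B => tp i j B = t)),
      ridx σ hσ τ t A hA = r := by
  by_cases h : t = tstar σ hσ
  · set r1 : Fin (cnt i j σ (tstar σ hσ)) := ⟨r, h ▸ hr⟩ with hr1
    set r0 : Fin (cnt i j σ t) :=
      Fin.cast (congrArg (cnt i j σ) h).symm ((pie σ hσ τ).symm r1) with hr0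
    refine ⟨((eT σ t).symm r0).1, ((eT σ t).symm r0).2, ?_⟩
    rw [ridx, dif_pos h]
    have h5 : eT σ t ⟨((eT σ t).symm r0).1, ((eT σ t).symm r0).2⟩ = r0 :=
      (eT σ t).apply_symm_apply r0
    rw [h5, hr0]
    have h6 : Fin.cast (congrArg (cnt i j σ) h)
        (Fin.cast (congrArg (cnt i j σ) h).symm ((pie σ hσ τ).symm r1))
        = (pie σ hσ τ).symm r1 := by
      apply Fin.ext; simp
    rw [h6, (pie σ hσ τ).apply_symm_apply r1]
  · refine ⟨((eT σ t).symm ⟨r, hr⟩).1, ((eT σ t).symm ⟨r, hr⟩).2, ?_⟩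
    rw [ridx, dif_neg h]
    have h5 : eT σ t ⟨((eT σ t).symm ⟨r, hr⟩).1, ((eT σ t).symm ⟨r, hr⟩).2⟩ = ⟨r, hr⟩ :=
      (eT σ t).apply_symm_apply _
    rw [h5]



lemma mem_tp {A : Finset (Fin (n i j))} {x : Fin (n i j)} {u : Fin 4}
    (hxA : x ∈ A) (hxJ : x ∈ J i j u) : u ∈ tp i j A := by
  simp only [tp, mem_filter, mem_univ, true_and]
  exact ⟨x, Finset.mem_inter.2 ⟨hxA, hxJ⟩⟩

lemma part_mem_filter (σ : Finpartition (Finset.univ : Finset (Fin (n i j))))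
    (x : Fin (n i j)) :
    σ.part x ∈ σ.parts.filter (fun B => tp i j B = tp i j (σ.part x)) :=
  Finset.mem_filter.2 ⟨σ.part_mem.2 (Finset.mem_univ x), rfl⟩

lemma slot_lt {σ : Finpartition (Finset.univ : Finset (Fin (n i j)))} (hσ : Pred i j σ)
    {u : Fin 4} {t : Finset (Fin 4)} {r : ℕ} (hu : u ∈ t) (hr : r < cnt i j σ t) :
    offset i j (kappa σ hσ) u t + r < sz i j u := by
  have h1 := offset_add_le_total i j (kappa σ hσ) hu
  have h2 : ∑ t' ∈ Finset.univ.filter (fun t' : Finset (Fin 4) => u ∈ t'),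
      kk i j (kappa σ hσ) t' = ∑ t' ∈ Finset.univ.filter (fun t' : Finset (Fin 4) => u ∈ t'),
      cnt i j σ t' := Finset.sum_congr rfl (fun t' _ => kk_kappa hσ t')
  rw [h2, sum_cnt hσ u] at h1
  have h3 := kk_kappa hσ t
  omega

noncomputable def hfun (σ : Finpartition (Finset.univ : Finset (Fin (n i j))))
    (hσ : Pred i j σ) (τ : Equiv.Perm (Fin (dd i j))) (u : Fin 4)
    (x : {x // x ∈ J i j u}) : Fin (sz i j u) :=
  ⟨offset i j (kappa σ hσ) u (tp i j (σ.part x.1))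
      + ridx σ hσ τ (tp i j (σ.part x.1)) (σ.part x.1) (part_mem_filter σ x.1),
    slot_lt hσ (mem_tp (σ.mem_part (Finset.mem_univ x.1)) x.2) (ridx_lt hσ τ _)⟩

lemma hfun_val {σ : Finpartition (Finset.univ : Finset (Fin (n i j)))} (hσ : Pred i j σ)
    (τ : Equiv.Perm (Fin (dd i j))) (u : Fin 4) (x : {x // x ∈ J i j u}) :
    (hfun σ hσ τ u x : ℕ) = offset i j (kappa σ hσ) u (tp i j (σ.part x.1))
      + ridx σ hσ τ (tp i j (σ.part x.1)) (σ.part x.1) (part_mem_filter σ x.1) := rfl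

lemma hfun_inj {σ : Finpartition (Finset.univ : Finset (Fin (n i j)))} (hσ : Pred i j σ)
    (τ : Equiv.Perm (Fin (dd i j))) (u : Fin 4) :
    Function.Injective (hfun σ hσ τ u) := by
  intro x y hxy
  have hv : offset i j (kappa σ hσ) u (tp i j (σ.part x.1))
        + ridx σ hσ τ (tp i j (σ.part x.1)) (σ.part x.1) (part_mem_filter σ x.1)
      = offset i j (kappa σ hσ) u (tp i j (σ.part y.1))
        + ridx σ hσ τ (tp i j (σ.part y.1)) (σ.part y.1) (part_mem_filter σ y.1) := by
    rw [← hfun_val hσ τ u x, ← hfun_val hσ τ u y, hxy]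
  have hux : u ∈ tp i j (σ.part x.1) := mem_tp (σ.mem_part (Finset.mem_univ x.1)) x.2
  have huy : u ∈ tp i j (σ.part y.1) := mem_tp (σ.mem_part (Finset.mem_univ y.1)) y.2
  have hrx := ridx_lt hσ τ (part_mem_filter σ x.1)
  have hry := ridx_lt hσ τ (part_mem_filter σ y.1)
  rw [← kk_kappa hσ] at hrx hry
  obtain ⟨htt, hrr⟩ := slot_eq i j (kappa σ hσ) hux huy hrx hry hv
  have hfy : σ.part y.1 ∈ σ.parts.filter (fun B => tp i j B = tp i j (σ.part x.1)) := by
    rw [htt]; exact part_mem_filter σ y.1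
  have hxy2 : ridx σ hσ τ (tp i j (σ.part x.1)) (σ.part x.1) (part_mem_filter σ x.1)
      = ridx σ hσ τ (tp i j (σ.part x.1)) (σ.part y.1) hfy := by
    rw [hrr]
    exact ridx_congr hσ τ htt.symm rfl (part_mem_filter σ y.1) hfy
  have hpp : σ.part x.1 = σ.part y.1 := ridx_inj hσ τ _ _ hxy2
  have hcard := (hσ (σ.part x.1) (σ.part_mem.2 (Finset.mem_univ x.1))).2 u
  apply Subtype.ext
  apply Finset.card_le_one.1 hcard
  · exact Finset.mem_inter.2 ⟨σ.mem_part (Finset.mem_univ x.1), x.2⟩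
  · refine Finset.mem_inter.2 ⟨?_, y.2⟩
    rw [hpp]; exact σ.mem_part (Finset.mem_univ y.1)

noncomputable def G (σ : Finpartition (Finset.univ : Finset (Fin (n i j))))
    (hσ : Pred i j σ) (τ : Equiv.Perm (Fin (dd i j))) : TT i j :=
  ⟨kappa σ hσ, fun u => ⟨hfun σ hσ τ u, hfun_inj hσ τ u⟩⟩

lemma hval_G {σ : Finpartition (Finset.univ : Finset (Fin (n i j)))} (hσ : Pred i j σ)
    (τ : Equiv.Perm (Fin (dd i j))) (x : Fin (n i j)) :
    hval i j (G σ hσ τ).2 x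
      = offset i j (kappa σ hσ) (uOf i j x) (tp i j (σ.part x))
        + ridx σ hσ τ (tp i j (σ.part x)) (σ.part x) (part_mem_filter σ x) :=
  hfun_val hσ τ (uOf i j x) ⟨x, mem_J_uOf i j x⟩

lemma filter_slot_eq {σ : Finpartition (Finset.univ : Finset (Fin (n i j)))}
    (hσ : Pred i j σ) (τ : Equiv.Perm (Fin (dd i j))) {t : Finset (Fin 4)}
    {A : Finset (Fin (n i j))} (hA : A ∈ σ.parts.filter (fun B => tp i j B = t)) :
    Finset.univ.filter (fun x : Fin (n i j) =>
        uOf i j x ∈ t ∧ hval i j (G σ hσ τ).2 x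
          = offset i j (kappa σ hσ) (uOf i j x) t + ridx σ hσ τ t A hA) = A := by
  obtain ⟨hAp, hAt⟩ := Finset.mem_filter.1 hA
  ext x
  simp only [mem_filter, mem_univ, true_and]
  constructor
  · rintro ⟨hu, hv⟩
    rw [hval_G hσ τ x] at hv
    have hux : uOf i j x ∈ tp i j (σ.part x) :=
      mem_tp (σ.mem_part (Finset.mem_univ x)) (mem_J_uOf i j x)
    have hrx := ridx_lt hσ τ (part_mem_filter σ x)
    have hrA := ridx_lt hσ τ hA
    rw [← kk_kappa hσ] at hrx hrA
    obtain ⟨htt, hrr⟩ := slot_eq i j (kappa σ hσ) hux hu hrx hrA hv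
    have hfx : σ.part x ∈ σ.parts.filter (fun B => tp i j B = t) := by
      rw [← htt]; exact part_mem_filter σ x
    have hxy2 : ridx σ hσ τ t (σ.part x) hfx = ridx σ hσ τ t A hA := by
      rw [← hrr]
      exact (ridx_congr hσ τ htt rfl (part_mem_filter σ x) hfx).symm
    have : σ.part x = A := ridx_inj hσ τ hfx hA hxy2
    rw [← this]
    exact σ.mem_part (Finset.mem_univ x)
  · intro hxA
    have hpart : σ.part x = A := σ.part_eq_of_mem hAp hxA
    have hu : uOf i j x ∈ t := by
      rw [← hAt]; exact mem_tp hxA (mem_J_uOf i j x)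
    refine ⟨hu, ?_⟩
    rw [hval_G hσ τ x]
    have h1 : tp i j (σ.part x) = t := by rw [hpart, hAt]
    rw [show offset i j (kappa σ hσ) (uOf i j x) (tp i j (σ.part x))
        = offset i j (kappa σ hσ) (uOf i j x) t from congrArg _ h1]
    congr 1
    exact ridx_congr hσ τ h1 hpart (part_mem_filter σ x) hA

lemma decode_G {σ : Finpartition (Finset.univ : Finset (Fin (n i j)))} (hσ : Pred i j σ)
    (τ : Equiv.Perm (Fin (dd i j))) : decodeB i j (G σ hσ τ) = σ.parts := by
  ext B
  simp only [decodeB, Finset.mem_image, Finset.mem_sigma, Finset.mem_range, Finset.mem_univ,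
    true_and]
  constructor
  · rintro ⟨⟨t, r⟩, hp, rfl⟩
    rw [show (G σ hσ τ).1 = kappa σ hσ from rfl, kk_kappa hσ] at hp
    obtain ⟨A, hA, hr⟩ := ridx_surj hσ τ hp
    have := filter_slot_eq hσ τ hA
    rw [hr] at this
    rw [show (G σ hσ τ).1 = kappa σ hσ from rfl, this]
    exact (Finset.mem_filter.1 hA).1
  · intro hB
    have hA : B ∈ σ.parts.filter (fun C => tp i j C = tp i j B) :=
      Finset.mem_filter.2 ⟨hB, rfl⟩
    refine ⟨⟨tp i j B, ridx σ hσ τ (tp i j B) B hA⟩, ?_, ?_⟩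
    · rw [show (G σ hσ τ).1 = kappa σ hσ from rfl, kk_kappa hσ]
      exact ridx_lt hσ τ hA
    · exact filter_slot_eq hσ τ hA



lemma eT_val_congr (σ : Finpartition (Finset.univ : Finset (Fin (n i j))))
    {t1 t2 : Finset (Fin 4)} {A B : Finset (Fin (n i j))} (ht : t1 = t2) (hAB : A = B)
    (h1 : A ∈ σ.parts.filter (fun C => tp i j C = t1))
    (h2 : B ∈ σ.parts.filter (fun C => tp i j C = t2)) :
    (eT σ t1 ⟨A, h1⟩ : ℕ) = (eT σ t2 ⟨B, h2⟩ : ℕ) := by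
  subst ht; subst hAB; rfl

lemma G_inj :
    Function.Injective
      (fun p : {σ : Finpartition (Finset.univ : Finset (Fin (n i j))) // Pred i j σ}
          × Equiv.Perm (Fin (dd i j)) => G p.1.1 p.1.2 p.2) := by
  rintro ⟨⟨σ, hσ⟩, τ⟩ ⟨⟨σ', hσ'⟩, τ'⟩ h
  simp only at h
  have hparts : σ.parts = σ'.parts := by
    rw [← decode_G hσ τ, ← decode_G hσ' τ', h]
  have hσσ : σ = σ' := Finpartition.ext hparts
  subst hσσ
  have hpr : hσ' = hσ := rfl
  rw [hpr] at h
  have hfm : hfun σ hσ τ (u0 (i := i) (j := j)) = hfun σ hσ τ' (u0 (i := i) (j := j)) := by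
    have h2 := congrArg Prod.snd h
    have h3 := congrFun h2 (u0 (i := i) (j := j))
    exact congrArg (fun e : {x // x ∈ J i j (u0 (i := i) (j := j))} ↪ Fin (sz i j (u0 (i := i) (j := j))) => (e : {x // x ∈ J i j (u0 (i := i) (j := j))} → Fin (sz i j (u0 (i := i) (j := j))))) h3
  have hττ : τ = τ' := by
    apply Equiv.ext
    intro s
    set hle := dd_le_cnt_tstar (i := i) (j := j) hσ with hhle
    set s' : Fin (cnt i j σ (tstar σ hσ)) := Fin.castLE hle s with hs'
    set Asub := (eT σ (tstar σ hσ)).symm s' with hAsub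
    have hAmem : Asub.1 ∈ σ.parts.filter (fun C => tp i j C = tstar σ hσ) := Asub.2
    have hAt : tp i j Asub.1 = tstar σ hσ := (Finset.mem_filter.1 hAmem).2
    have hu0 : u0 (i := i) (j := j) ∈ tp i j Asub.1 := by
      rw [hAt]; exact u0_mem_tstar hσ
    have hne : (Asub.1 ∩ J i j (u0 (i := i) (j := j))).Nonempty := by
      simpa [tp] using hu0
    obtain ⟨x, hx⟩ := hne
    obtain ⟨hxA, hxJ⟩ := Finset.mem_inter.1 hx
    have hpart : σ.part x = Asub.1 := σ.part_eq_of_mem (Finset.mem_filter.1 hAmem).1 hxA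
    have hkey := congrFun hfm ⟨x, hxJ⟩
    have hval2 : offset i j (kappa σ hσ) (u0 (i := i) (j := j)) (tp i j (σ.part x))
          + ridx σ hσ τ (tp i j (σ.part x)) (σ.part x) (part_mem_filter σ x)
        = offset i j (kappa σ hσ) (u0 (i := i) (j := j)) (tp i j (σ.part x))
          + ridx σ hσ τ' (tp i j (σ.part x)) (σ.part x) (part_mem_filter σ x) := by
      rw [← hfun_val hσ τ (u0 (i := i) (j := j)) ⟨x, hxJ⟩,
        ← hfun_val hσ τ' (u0 (i := i) (j := j)) ⟨x, hxJ⟩, hkey]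
    have hridx : ridx σ hσ τ (tp i j (σ.part x)) (σ.part x) (part_mem_filter σ x)
        = ridx σ hσ τ' (tp i j (σ.part x)) (σ.part x) (part_mem_filter σ x) := by omega
    have hcond : tp i j (σ.part x) = tstar σ hσ := by rw [hpart]; exact hAt
    rw [ridx, dif_pos hcond, ridx, dif_pos hcond] at hridx
    have hXval : (eT σ (tp i j (σ.part x)) ⟨σ.part x, part_mem_filter σ x⟩ : ℕ) = (s' : ℕ) := by
      rw [eT_val_congr σ hcond hpart (part_mem_filter σ x) hAmem]
      have : (⟨Asub.1, hAmem⟩ : {A // A ∈ σ.parts.filter (fun C => tp i j C = tstar σ hσ)})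
          = Asub := rfl
      rw [this, hAsub, (eT σ (tstar σ hσ)).apply_symm_apply]
    have hX : Fin.cast (congrArg (cnt i j σ) hcond)
        (eT σ (tp i j (σ.part x)) ⟨σ.part x, part_mem_filter σ x⟩) = s' := by
      apply Fin.ext
      simpa using hXval
    rw [hX] at hridx
    have hs'e : s' = Fin.castLEEmb hle s := rfl
    rw [hs'e] at hridx
    rw [show pie σ hσ τ (Fin.castLEEmb hle s) = Fin.castLEEmb hle (τ s) from
        Equiv.Perm.viaFintypeEmbedding_apply_image τ (Fin.castLEEmb hle) s,
      show pie σ hσ τ' (Fin.castLEEmb hle s) = Fin.castLEEmb hle (τ' s) from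
        Equiv.Perm.viaFintypeEmbedding_apply_image τ' (Fin.castLEEmb hle) s] at hridx
    apply Fin.ext
    simpa using hridx
  simp only [Prod.mk.injEq, Subtype.mk.injEq]
  exact ⟨trivial, hττ⟩

lemma card_TypeIdx : Fintype.card (TypeIdx) = 11 := by
  rw [Fintype.card_subtype]
  decide

lemma card_TT :
    Nat.card (TT i j)
      = (M i j) ^ 11 * (i.factorial * i.factorial * (j.factorial * j.factorial)) := by
  classical
  rw [Nat.card_eq_fintype_card, Fintype.card_prod]
  congr 1
  · rw [Fintype.card_fun, Fintype.card_fin, card_TypeIdx]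
  · rw [Fintype.card_pi]
    have hcard : ∀ u : Fin 4,
        Fintype.card ({x // x ∈ J i j u} ↪ Fin (sz i j u)) = (sz i j u).factorial := by
      intro u
      rw [Fintype.card_embedding_eq, Fintype.card_fin, Fintype.card_coe, card_J,
        Nat.descFactorial_self]
    rw [Fin.prod_univ_four]
    rw [hcard 0, hcard 1, hcard 2, hcard 3]
    simp only [sz, Matrix.cons_val_zero, Matrix.cons_val_one, Matrix.head_cons,
      Matrix.cons_val_two, Matrix.tail_cons, Matrix.cons_val_three]
    ring

lemma main_count :
    Nat.card {σ : Finpartition (Finset.univ : Finset (Fin (n i j))) // Pred i j σ}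
        * (dd i j).factorial
      ≤ (M i j) ^ 11 * (i.factorial * i.factorial * (j.factorial * j.factorial)) := by
  classical
  have h1 := Nat.card_le_card_of_injective _ (G_inj (i := i) (j := j))
  rw [Nat.card_prod, Nat.card_eq_fintype_card (α := Equiv.Perm (Fin (dd i j))),
    Fintype.card_perm, Fintype.card_fin, card_TT] at h1
  exact h1

end Stmt13


/-- The number of partitions of `{1, …, 2i+2j}` each of whose blocks meets
each of the four index sets `J_1, J_2, J_3, J_4` in at most one element and has at least
two elements is at most `(i!)² (j!)² max{i+1, j+1}^{11} / ⌈max{i,j}/7⌉!`. -/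
theorem stmt13 (i j : ℕ) (hi : 1 ≤ i) (hj : 1 ≤ j) :
    (Nat.card {σ : Finpartition (Finset.univ : Finset (Fin (2 * i + 2 * j))) //
      ∀ A ∈ σ.parts, 2 ≤ A.card ∧
        (A ∩ Finset.univ.filter (fun a : Fin (2 * i + 2 * j) => (a : ℕ) < i)).card ≤ 1 ∧
        (A ∩ Finset.univ.filter
          (fun a : Fin (2 * i + 2 * j) => i ≤ (a : ℕ) ∧ (a : ℕ) < 2 * i)).card ≤ 1 ∧
        (A ∩ Finset.univ.filter
          (fun a : Fin (2 * i + 2 * j) => 2 * i ≤ (a : ℕ) ∧ (a : ℕ) < 2 * i + j)).card ≤ 1 ∧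
        (A ∩ Finset.univ.filter
          (fun a : Fin (2 * i + 2 * j) => 2 * i + j ≤ (a : ℕ))).card ≤ 1} : ℝ)
      ≤ (Nat.factorial i : ℝ) ^ 2 * (Nat.factorial j : ℝ) ^ 2 *
          (max (i + 1) (j + 1) : ℝ) ^ 11 /
          (Nat.factorial ⌈(max i j : ℝ) / 7⌉₊ : ℝ) := by
  classical
  have hcardle : Nat.card {σ : Finpartition (Finset.univ : Finset (Fin (2 * i + 2 * j))) //
      ∀ A ∈ σ.parts, 2 ≤ A.card ∧
        (A ∩ Finset.univ.filter (fun a : Fin (2 * i + 2 * j) => (a : ℕ) < i)).card ≤ 1 ∧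
        (A ∩ Finset.univ.filter
          (fun a : Fin (2 * i + 2 * j) => i ≤ (a : ℕ) ∧ (a : ℕ) < 2 * i)).card ≤ 1 ∧
        (A ∩ Finset.univ.filter
          (fun a : Fin (2 * i + 2 * j) => 2 * i ≤ (a : ℕ) ∧ (a : ℕ) < 2 * i + j)).card ≤ 1 ∧
        (A ∩ Finset.univ.filter
          (fun a : Fin (2 * i + 2 * j) => 2 * i + j ≤ (a : ℕ))).card ≤ 1}
      ≤ Nat.card {σ : Finpartition (Finset.univ : Finset (Fin (Stmt13.n i j))) //
          Stmt13.Pred i j σ} := by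
    apply Nat.card_le_card_of_injective
      (fun σp => (⟨σp.1, by
        intro A hA
        obtain ⟨h1, h2, h3, h4, h5⟩ := σp.2 A hA
        refine ⟨h1, ?_⟩
        intro u
        fin_cases u
        exacts [h2, h3, h4, h5]⟩ :
        {σ : Finpartition (Finset.univ : Finset (Fin (Stmt13.n i j))) // Stmt13.Pred i j σ}))
    intro a b hab
    simp only [Subtype.mk.injEq] at hab
    exact Subtype.ext (Subtype.mk.inj hab)
  have key := Stmt13.main_count (i := i) (j := j)
  have h2 : Nat.card {σ : Finpartition (Finset.univ : Finset (Fin (2 * i + 2 * j))) //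
      ∀ A ∈ σ.parts, 2 ≤ A.card ∧
        (A ∩ Finset.univ.filter (fun a : Fin (2 * i + 2 * j) => (a : ℕ) < i)).card ≤ 1 ∧
        (A ∩ Finset.univ.filter
          (fun a : Fin (2 * i + 2 * j) => i ≤ (a : ℕ) ∧ (a : ℕ) < 2 * i)).card ≤ 1 ∧
        (A ∩ Finset.univ.filter
          (fun a : Fin (2 * i + 2 * j) => 2 * i ≤ (a : ℕ) ∧ (a : ℕ) < 2 * i + j)).card ≤ 1 ∧
        (A ∩ Finset.univ.filter
          (fun a : Fin (2 * i + 2 * j) => 2 * i + j ≤ (a : ℕ))).card ≤ 1}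
        * (Stmt13.dd i j).factorial
      ≤ (Stmt13.M i j) ^ 11 * (i.factorial * i.factorial * (j.factorial * j.factorial)) :=
    le_trans (Nat.mul_le_mul_right _ hcardle) key
  have hpos : (0 : ℝ) < (Nat.factorial ⌈(max (i : ℝ) (j : ℝ)) / 7⌉₊ : ℝ) := by
    exact_mod_cast Nat.factorial_pos _
  rw [le_div_iff₀ hpos]
  have hdd : ⌈(max (i : ℝ) (j : ℝ)) / 7⌉₊ = Stmt13.dd i j := by
    rw [Stmt13.dd, Nat.cast_max]
  have h3 := (Nat.cast_le (α := ℝ)).2 h2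
  push_cast at h3
  rw [hdd]
  calc _ ≤ (max (i : ℝ) (j : ℝ) + 1) ^ 11
        * ((i.factorial : ℝ) * (i.factorial : ℝ) * ((j.factorial : ℝ) * (j.factorial : ℝ))) :=
      h3
    _ = (Nat.factorial i : ℝ) ^ 2 * (Nat.factorial j : ℝ) ^ 2 *
          (max ((i : ℝ) + 1) ((j : ℝ) + 1)) ^ 11 := by
        rw [show max ((i : ℝ) + 1) ((j : ℝ) + 1) = max (i : ℝ) (j : ℝ) + 1 from
          max_add_add_right _ _ _]
        ring
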